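/- Let $m \geq 2$ and $L \geq 1$ be integers. For vectors $\mathbf{v} = (v_1, \ldots, v_L)$, $\mathbf{v}' = (v_1', \ldots, v_L') \in \{0,1\}^L$ and integer $a$, define $S(\mathbf{v}, \mathbf{v}', a) = \sum_{x=1}^{L} \sum_{t=1}^{m-1} e_m\big(t(\sum_{j=1}^x v_j - \sum_{j=1}^x v_j' - a)\big)$. Then $\sum_{a=0}^{m-1} \sum_{\mathbf{v}, \mathbf{v}' \in \{0,1\}^L} |S(\mathbf{v}, \mathbf{v}', a)|^2 \leq 2^{2L+2} m^4 L$. -/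

import Mathlib

open Real

noncomputable def eAdd (m : ℕ) (z : ℝ) : ℂ := Complex.exp (2 * π * Complex.I * z / m)

open Finset
open scoped symmDiff
set_option maxHeartbeats 2000000

lemma eAdd_add (m : ℕ) (z w : ℝ) : eAdd m (z + w) = eAdd m z * eAdd m w := by
  rw [eAdd, eAdd, eAdd, ← Complex.exp_add]
  congr 1
  push_cast
  ring

lemma eAdd_norm (m : ℕ) (z : ℝ) : ‖eAdd m z‖ = 1 := by
  rw [eAdd, Complex.norm_exp]
  have : (2 * (π:ℂ) * Complex.I * z / m).re = 0 := by
    simp [Complex.div_re, Complex.mul_re, Complex.mul_im]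
  rw [this, Real.exp_zero]

lemma eAdd_conj (m : ℕ) (z : ℝ) : (starRingEnd ℂ) (eAdd m z) = eAdd m (-z) := by
  rw [eAdd, eAdd, ← Complex.exp_conj]
  congr 1
  simp [map_div₀, Complex.conj_I, map_ofNat]

lemma eAdd_pow (m : ℕ) (z : ℝ) (a : ℕ) : (eAdd m z) ^ a = eAdd m (z * a) := by
  rw [eAdd, eAdd, ← Complex.exp_nat_mul]
  congr 1
  push_cast
  ring

lemma eAdd_int (m : ℕ) (hm : m ≠ 0) (k : ℤ) : eAdd m ((k : ℝ) * m) = 1 := by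
  have hmC : (m:ℂ) ≠ 0 := by exact_mod_cast hm
  have h : (2 * (π:ℂ) * Complex.I * ((((k:ℝ) * m):ℝ):ℂ) / m) = k * (2 * π * Complex.I) := by
    push_cast
    field_simp
  rw [eAdd, h, Complex.exp_int_mul_two_pi_mul_I]

lemma eAdd_eq_one_iff (m : ℕ) (hm : m ≠ 0) (c : ℤ) : eAdd m (c : ℝ) = 1 ↔ (m:ℤ) ∣ c := by
  have hπ : (π:ℂ) ≠ 0 := by exact_mod_cast Real.pi_ne_zero
  have hI : Complex.I ≠ 0 := Complex.I_ne_zero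
  have hmC : (m:ℂ) ≠ 0 := by exact_mod_cast hm
  rw [eAdd, Complex.exp_eq_one_iff]
  constructor
  · rintro ⟨n, hn⟩
    refine ⟨n, ?_⟩
    field_simp at hn
    have h2 : 2 * (π:ℂ) * Complex.I * (c:ℂ) = 2 * (π:ℂ) * Complex.I * ((m:ℂ) * n) := by
      push_cast at hn
      linear_combination (2 * (π:ℂ) * Complex.I) * hn
    have h3 := mul_left_cancel₀ (by simp [hπ, hI] : (2 * (π:ℂ) * Complex.I) ≠ 0) h2
    exact_mod_cast h3
  · rintro ⟨n, hn⟩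
    refine ⟨n, ?_⟩
    have : ((c:ℝ):ℂ) = (n:ℂ) * m := by push_cast [hn]; ring
    rw [this]
    field_simp

lemma eAdd_zero (m : ℕ) : eAdd m 0 = 1 := by simp [eAdd]

lemma sum_eAdd (m : ℕ) (hm : m ≠ 0) (c : ℤ) (hc : ¬ (m:ℤ) ∣ c) :
    ∑ a ∈ range m, eAdd m ((c:ℝ) * a) = 0 := by
  have hζ : eAdd m (c:ℝ) ≠ 1 := fun h => hc ((eAdd_eq_one_iff m hm c).mp h)
  have h1 : ∀ a : ℕ, eAdd m ((c:ℝ) * a) = (eAdd m (c:ℝ)) ^ a := fun a => (eAdd_pow m _ a).symm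
  rw [Finset.sum_congr rfl fun a _ => h1 a, geom_sum_eq hζ, eAdd_pow, eAdd_int m hm c]
  simp

lemma norm_sq_eq_re_mul_conj (z : ℂ) : ‖z‖^2 = (z * (starRingEnd ℂ) z).re := by
  rw [Complex.mul_conj, Complex.ofReal_re, Complex.normSq_eq_norm_sq]

lemma ortho (m : ℕ) (hm : 2 ≤ m) (g : ℕ → ℂ) :
    ∑ a ∈ range m, ‖∑ t ∈ Icc 1 (m-1), g t * eAdd m (-((t:ℝ) * a))‖^2
      = m * ∑ t ∈ Icc 1 (m-1), ‖g t‖^2 := by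
  have hm0 : m ≠ 0 := by omega
  set S : ℕ → ℂ := fun a => ∑ t ∈ Icc 1 (m-1), g t * eAdd m (-((t:ℝ) * a)) with hS
  have expand : ∀ a : ℕ, S a * (starRingEnd ℂ) (S a)
      = ∑ t ∈ Icc 1 (m-1), ∑ t' ∈ Icc 1 (m-1),
          g t * (starRingEnd ℂ) (g t') * eAdd m ((((t':ℤ) - (t:ℤ)):ℝ) * a) := by
    intro a
    simp only [hS]
    rw [map_sum, Finset.sum_mul_sum]
    refine Finset.sum_congr rfl fun t _ => Finset.sum_congr rfl fun t' _ => ?_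
    rw [map_mul, eAdd_conj, neg_neg, mul_mul_mul_comm, ← eAdd_add]
    congr 1
    push_cast
    ring
  have inner : ∀ t ∈ Icc 1 (m-1), ∀ t' ∈ Icc 1 (m-1),
      ∑ a ∈ range m, eAdd m ((((t':ℤ) - (t:ℤ)):ℝ) * a) = if t' = t then (m:ℂ) else 0 := by
    intro t ht t' ht'
    by_cases h : t' = t
    · rw [if_pos h, h]
      have hz : ∀ a : ℕ, eAdd m ((((t:ℤ) - (t:ℤ)):ℝ) * a) = 1 := by
        intro a
        rw [show (((t:ℤ) - (t:ℤ)):ℝ) * a = (0:ℝ) by push_cast; ring, eAdd_zero]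
      rw [Finset.sum_congr rfl fun a _ => hz a]
      simp
    · rw [if_neg h]
      simp only [← Int.cast_sub]
      refine sum_eAdd m hm0 ((t':ℤ) - (t:ℤ)) fun hdvd => ?_
      simp only [Finset.mem_Icc] at ht ht'
      have h1 : ((t':ℤ) - t) ≠ 0 := by
        intro h0; apply h; omega
      have h2 := Int.le_of_dvd (abs_pos.mpr h1) ((dvd_abs _ _).mpr hdvd)
      have h3 : |((t':ℤ) - t)| ≤ (m:ℤ) - 1 := by
        rw [abs_le]; omega
      omega
  have key : ∑ a ∈ range m, S a * (starRingEnd ℂ) (S a)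
      = (m:ℂ) * ∑ t ∈ Icc 1 (m-1), g t * (starRingEnd ℂ) (g t) := by
    calc ∑ a ∈ range m, S a * (starRingEnd ℂ) (S a)
        = ∑ a ∈ range m, ∑ t ∈ Icc 1 (m-1), ∑ t' ∈ Icc 1 (m-1),
            g t * (starRingEnd ℂ) (g t') * eAdd m ((((t':ℤ) - (t:ℤ)):ℝ) * a) :=
          Finset.sum_congr rfl fun a _ => expand a
      _ = ∑ t ∈ Icc 1 (m-1), ∑ t' ∈ Icc 1 (m-1), ∑ a ∈ range m,
            g t * (starRingEnd ℂ) (g t') * eAdd m ((((t':ℤ) - (t:ℤ)):ℝ) * a) := by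
          rw [Finset.sum_comm]
          exact Finset.sum_congr rfl fun t _ => Finset.sum_comm
      _ = ∑ t ∈ Icc 1 (m-1), ∑ t' ∈ Icc 1 (m-1),
            g t * (starRingEnd ℂ) (g t') * (if t' = t then (m:ℂ) else 0) := by
          refine Finset.sum_congr rfl fun t ht => Finset.sum_congr rfl fun t' ht' => ?_
          rw [← Finset.mul_sum, inner t ht t' ht']
      _ = ∑ t ∈ Icc 1 (m-1), g t * (starRingEnd ℂ) (g t) * (m:ℂ) := by
          refine Finset.sum_congr rfl fun t ht => ?_
          rw [Finset.sum_eq_single_of_mem t ht]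
          · simp
          · intro b hb hbt
            simp [hbt]
      _ = (m:ℂ) * ∑ t ∈ Icc 1 (m-1), g t * (starRingEnd ℂ) (g t) := by
          rw [Finset.mul_sum]
          exact Finset.sum_congr rfl fun t _ => by ring
  have := congrArg Complex.re key
  rw [Complex.re_sum] at this
  rw [show ∑ a ∈ range m, ‖S a‖^2 = ∑ a ∈ range m, (S a * (starRingEnd ℂ) (S a)).re from
    Finset.sum_congr rfl fun a _ => norm_sq_eq_re_mul_conj _]
  rw [this, Complex.mul_re]
  simp only [Complex.natCast_re, Complex.natCast_im, zero_mul, sub_zero]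
  congr 1
  rw [Complex.re_sum]
  exact Finset.sum_congr rfl fun t _ => (norm_sq_eq_re_mul_conj _).symm

lemma eAdd_sum {α : Type*} (m : ℕ) (s : Finset α) (f : α → ℝ) :
    eAdd m (∑ j ∈ s, f j) = ∏ j ∈ s, eAdd m (f j) := by
  classical
  induction s using Finset.induction_on with
  | empty => simp [eAdd_zero]
  | insert _ _ h ih => rw [Finset.sum_insert h, Finset.prod_insert h, eAdd_add, ih]

lemma norm_one_add_eAdd_neg (m : ℕ) (z : ℝ) : ‖1 + eAdd m (-z)‖ = ‖1 + eAdd m z‖ := by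
  rw [show (1 : ℂ) + eAdd m (-z) = (starRingEnd ℂ) (1 + eAdd m z) by
    rw [map_add, eAdd_conj, map_one]]
  exact RCLike.norm_conj _

-- epsilon coefficient
noncomputable def eps {L : ℕ} (x x' j : Fin L) : ℝ :=
  (if j ∈ Iic x then (1:ℝ) else 0) - (if j ∈ Iic x' then (1:ℝ) else 0)

lemma card_symmDiff_Iic {L : ℕ} (x x' : Fin L) :
    ((Iic x) ∆ (Iic x')).card = Nat.dist x.val x'.val := by
  rcases le_total x x' with h | h
  · rw [symmDiff_of_le (Finset.Iic_subset_Iic.mpr h), Finset.card_sdiff_of_subset (Finset.Iic_subset_Iic.mpr h),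
      Fin.card_Iic, Fin.card_Iic, Nat.dist_eq_sub_of_le h]
    omega
  · rw [symmDiff_comm, symmDiff_of_le (Finset.Iic_subset_Iic.mpr h),
      Finset.card_sdiff_of_subset (Finset.Iic_subset_Iic.mpr h),
      Fin.card_Iic, Fin.card_Iic, Nat.dist_eq_sub_of_le_right h]
    omega

lemma vsum_eq (m L : ℕ) (t : ℝ) (x x' : Fin L) :
    ∑ v ∈ Fintype.piFinset (fun _ : Fin L => ({0, 1} : Finset ℕ)),
      eAdd m (t * ((∑ j ∈ Iic x, (v j : ℝ)) - (∑ j ∈ Iic x', (v j : ℝ))))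
    = ∏ j : Fin L, (1 + eAdd m (t * eps x x' j)) := by
  have step1 : ∀ v : Fin L → ℕ,
      t * ((∑ j ∈ Iic x, (v j : ℝ)) - (∑ j ∈ Iic x', (v j : ℝ)))
        = ∑ j : Fin L, t * eps x x' j * (v j : ℝ) := by
    intro v
    have hx : (∑ j ∈ Iic x, (v j : ℝ)) = ∑ j : Fin L, (if j ∈ Iic x then (v j : ℝ) else 0) := by
      rw [Finset.sum_ite_mem, Finset.univ_inter]
    have hx' : (∑ j ∈ Iic x', (v j : ℝ)) = ∑ j : Fin L, (if j ∈ Iic x' then (v j : ℝ) else 0) := by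
      rw [Finset.sum_ite_mem, Finset.univ_inter]
    rw [hx, hx', ← Finset.sum_sub_distrib, Finset.mul_sum]
    refine Finset.sum_congr rfl fun j _ => ?_
    unfold eps
    by_cases h1 : j ∈ Iic x <;> by_cases h2 : j ∈ Iic x' <;> simp [h1, h2] <;> ring
  rw [Finset.sum_congr rfl fun v _ => by rw [step1 v, eAdd_sum]]
  have hfac := Finset.sum_prod_piFinset (ι := Fin L) ({0, 1} : Finset ℕ)
    (fun j u => eAdd m (t * eps x x' j * (u : ℝ)))
  rw [hfac]
  refine Finset.prod_congr rfl fun j _ => ?_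
  rw [show ({0,1} : Finset ℕ) = insert 0 {1} from rfl, Finset.sum_insert (by norm_num),
    Finset.sum_singleton]
  norm_num [eAdd_zero]

lemma vsum_norm (m L : ℕ) (t : ℝ) (x x' : Fin L) :
    ‖∑ v ∈ Fintype.piFinset (fun _ : Fin L => ({0, 1} : Finset ℕ)),
      eAdd m (t * ((∑ j ∈ Iic x, (v j : ℝ)) - (∑ j ∈ Iic x', (v j : ℝ))))‖
    = 2 ^ (L - Nat.dist x.val x'.val) * ‖1 + eAdd m t‖ ^ (Nat.dist x.val x'.val) := by
  classical
  rw [vsum_eq, norm_prod]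
  set D : Finset (Fin L) := (Iic x) ∆ (Iic x') with hD
  have hcard : D.card = Nat.dist x.val x'.val := card_symmDiff_Iic x x'
  rw [← Finset.prod_sdiff (Finset.subset_univ D)]
  have h1 : ∀ j ∈ Finset.univ \ D, ‖1 + eAdd m (t * eps x x' j)‖ = 2 := by
    intro j hj
    rw [Finset.mem_sdiff, hD, Finset.mem_symmDiff] at hj
    have : eps x x' j = 0 := by
      unfold eps
      by_cases h1 : j ∈ Iic x <;> by_cases h2 : j ∈ Iic x' <;> simp [h1, h2] <;> tauto
    rw [this, mul_zero, eAdd_zero]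
    norm_num
  have h2 : ∀ j ∈ D, ‖1 + eAdd m (t * eps x x' j)‖ = ‖1 + eAdd m t‖ := by
    intro j hj
    rw [hD, Finset.mem_symmDiff] at hj
    rcases hj with ⟨ha, hb⟩ | ⟨ha, hb⟩
    · have : eps x x' j = 1 := by unfold eps; simp [ha, hb]
      rw [this, mul_one]
    · have : eps x x' j = -1 := by unfold eps; simp [ha, hb]
      rw [this, mul_neg_one, norm_one_add_eAdd_neg]
  rw [Finset.prod_congr rfl h1, Finset.prod_congr rfl h2, Finset.prod_const, Finset.prod_const,
    hcard, Finset.card_sdiff_of_subset (Finset.subset_univ D), Finset.card_univ, Fintype.card_fin, hcard]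

lemma mygeom_le (q : ℝ) (h0 : 0 ≤ q) (h1 : q < 1) (n : ℕ) :
    ∑ k ∈ range n, q ^ k ≤ 1 / (1 - q) := by
  have h2 : 0 < 1 - q := by linarith
  rw [geom_sum_eq (ne_of_lt h1)]
  have h3 : (q ^ n - 1)/(q - 1) = (1 - q^n)/(1-q) := by
    rw [← neg_div_neg_eq]; ring_nf
  rw [h3, div_le_div_iff_of_pos_right h2]
  nlinarith [pow_nonneg h0 n]

lemma dist_sum (L : ℕ) (q : ℝ) (h0 : 0 ≤ q) (h1 : q < 1) :
    ∑ x : Fin L, ∑ x' : Fin L, q ^ Nat.dist x.val x'.val ≤ L * (2 / (1 - q)) := by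
  have h2 : 0 < 1 - q := by linarith
  have inner : ∀ x : Fin L, ∑ x' : Fin L, q ^ Nat.dist x.val x'.val ≤ 2 / (1 - q) := by
    intro x
    have hi : x.val < L := x.isLt
    set i := x.val
    rw [Fin.sum_univ_eq_sum_range (fun j => q ^ Nat.dist i j) L]
    have pw : ∀ j ∈ range L, q ^ Nat.dist i j ≤
        (if j ≤ i then q ^ (i - j) else 0) + (if i ≤ j then q ^ (j - i) else 0) := by
      intro j _
      rcases lt_trichotomy j i with h | h | h
      · rw [if_pos h.le, if_neg (by omega), Nat.dist_eq_sub_of_le_right h.le, add_zero]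
      · subst h
        simp [Nat.dist_self]
      · rw [if_neg (by omega), if_pos h.le, Nat.dist_eq_sub_of_le h.le, zero_add]
    refine (Finset.sum_le_sum pw).trans ?_
    rw [Finset.sum_add_distrib]
    have e1 : ∑ j ∈ range L, (if j ≤ i then q ^ (i - j) else 0) = ∑ k ∈ range (i+1), q ^ k := by
      rw [← Finset.sum_filter]
      have : (range L).filter (fun j => j ≤ i) = range (i+1) := by
        ext k; simp; omega
      rw [this]
      exact Finset.sum_range_reflect (fun k => q ^ k) (i+1)
    have e2 : ∑ j ∈ range L, (if i ≤ j then q ^ (j - i) else 0) = ∑ k ∈ range (L - i), q ^ k := by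
      rw [← Finset.sum_filter]
      have : (range L).filter (fun j => i ≤ j) = Finset.Ico i L := by
        ext k; simp; omega
      rw [this, Finset.sum_Ico_eq_sum_range]
      exact Finset.sum_congr rfl fun k _ => by congr 1; omega
    rw [e1, e2]
    have := mygeom_le q h0 h1 (i+1)
    have := mygeom_le q h0 h1 (L - i)
    rw [show (2:ℝ) / (1-q) = 1/(1-q) + 1/(1-q) by ring]
    linarith
  calc ∑ x : Fin L, ∑ x' : Fin L, q ^ Nat.dist x.val x'.val
      ≤ ∑ _x : Fin L, 2 / (1 - q) := Finset.sum_le_sum fun x _ => inner x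
    _ = L * (2 / (1 - q)) := by rw [Finset.sum_const, Finset.card_univ, Fintype.card_fin,
        nsmul_eq_mul]

lemma norm_one_add_eAdd_sq (m : ℕ) (t : ℝ) :
    ‖1 + eAdd m t‖ ^ 2 = 2 + 2 * Real.cos (2 * π * t / m) := by
  have h : eAdd m t = Complex.exp (((2 * π * t / m : ℝ) : ℂ) * Complex.I) := by
    rw [eAdd]
    congr 1
    push_cast
    ring
  rw [h, Complex.exp_mul_I]
  rw [show (1 : ℂ) + (Complex.cos ((2 * π * t / m : ℝ):ℂ) + Complex.sin ((2 * π * t / m : ℝ):ℂ) * Complex.I)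
      = ((1 + Real.cos (2 * π * t / m) : ℝ) : ℂ) + ((Real.sin (2 * π * t / m) : ℝ):ℂ) * Complex.I by
    rw [← Complex.ofReal_cos, ← Complex.ofReal_sin]; push_cast; ring]
  rw [Complex.sq_norm, Complex.normSq_add_mul_I]
  have := Real.sin_sq_add_cos_sq (2 * π * t / m)
  nlinarith

lemma sin_ge (m t : ℕ) (hm : 2 ≤ m) (ht1 : 1 ≤ t) (ht2 : t ≤ m - 1) :
    2 / (m:ℝ) ≤ Real.sin (π * t / m) := by
  have hmR : (2:ℝ) ≤ m := by exact_mod_cast hm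
  have hm0 : (0:ℝ) < m := by linarith
  have htR : (1:ℝ) ≤ t := by exact_mod_cast ht1
  have ht2R : (t:ℝ) ≤ (m:ℝ) - 1 := by
    have h := ht2
    have : (t:ℝ) ≤ ((m-1 : ℕ):ℝ) := by exact_mod_cast h
    rw [Nat.cast_sub (by omega)] at this
    simpa using this
  have hπ := Real.pi_pos
  have key : ∀ w : ℝ, π / m ≤ w → w ≤ π / 2 → 2 / (m:ℝ) ≤ Real.sin w := by
    intro w h1 h2
    have h0w : 0 ≤ w := le_trans (by positivity) h1
    calc 2 / (m:ℝ) = 2 / π * (π / m) := by field_simp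
      _ ≤ 2 / π * w := by
          apply mul_le_mul_of_nonneg_left h1 (by positivity)
      _ ≤ Real.sin w := Real.mul_le_sin h0w h2
  set u := π * t / m with hu
  have hu1 : π / m ≤ u := by
    rw [hu, show π / (m:ℝ) = π * 1 / m by ring]
    gcongr
  have hu2 : u ≤ π - π / m := by
    have h4 : u ≤ π * ((m:ℝ) - 1) / m := by
      rw [hu]; gcongr
    have h5 : π * ((m:ℝ) - 1) / m = π - π / m := by field_simp
    linarith [h4.trans_eq h5]
  rcases le_or_gt u (π / 2) with h | h
  · exact key u hu1 h
  · rw [show u = π - (π - u) by ring, Real.sin_pi_sub]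
    apply key (π - u)
    · linarith
    · linarith

lemma sum_vv (m L : ℕ) (t : ℝ) (hq1 : ‖1 + eAdd m t‖^2/4 < 1) :
    ∑ v ∈ Fintype.piFinset (fun _ : Fin L => ({0, 1} : Finset ℕ)),
      ∑ v' ∈ Fintype.piFinset (fun _ : Fin L => ({0, 1} : Finset ℕ)),
        ‖∑ x : Fin L, eAdd m (t * ((∑ j ∈ Iic x, (v j : ℝ)) - (∑ j ∈ Iic x, (v' j : ℝ))))‖^2
      ≤ 4^L * (L * (2 / (1 - ‖1 + eAdd m t‖^2/4))) := by
  classical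
  set P := Fintype.piFinset (fun _ : Fin L => ({0, 1} : Finset ℕ)) with hP
  have hq0 : (0:ℝ) ≤ ‖1 + eAdd m t‖^2/4 := by positivity
  have expand : ∀ v v' : Fin L → ℕ,
      ‖∑ x : Fin L, eAdd m (t * ((∑ j ∈ Iic x, (v j : ℝ)) - (∑ j ∈ Iic x, (v' j : ℝ))))‖^2
      = (∑ x : Fin L, ∑ x' : Fin L,
          eAdd m (t * ((∑ j ∈ Iic x, (v j : ℝ)) - (∑ j ∈ Iic x', (v j : ℝ)))) *
          eAdd m (t * ((∑ j ∈ Iic x', (v' j : ℝ)) - (∑ j ∈ Iic x, (v' j : ℝ))))).re := by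
    intro v v'
    have hz : (∑ x : Fin L, eAdd m (t * ((∑ j ∈ Iic x, (v j : ℝ)) - (∑ j ∈ Iic x, (v' j : ℝ))))) *
        (starRingEnd ℂ) (∑ x : Fin L, eAdd m (t * ((∑ j ∈ Iic x, (v j : ℝ)) - (∑ j ∈ Iic x, (v' j : ℝ)))))
        = ∑ x : Fin L, ∑ x' : Fin L,
          eAdd m (t * ((∑ j ∈ Iic x, (v j : ℝ)) - (∑ j ∈ Iic x', (v j : ℝ)))) *
          eAdd m (t * ((∑ j ∈ Iic x', (v' j : ℝ)) - (∑ j ∈ Iic x, (v' j : ℝ)))) := by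
      rw [map_sum, Finset.sum_mul_sum]
      refine Finset.sum_congr rfl fun x _ => Finset.sum_congr rfl fun x' _ => ?_
      rw [eAdd_conj, ← eAdd_add, ← eAdd_add]
      congr 1
      ring
    rw [norm_sq_eq_re_mul_conj, hz]
  have key : ∀ (F G : Fin L → Fin L → (Fin L → ℕ) → ℂ),
      ∑ v ∈ P, ∑ v' ∈ P, ∑ x : Fin L, ∑ x' : Fin L, F x x' v * G x x' v'
      = ∑ x : Fin L, ∑ x' : Fin L, (∑ v ∈ P, F x x' v) * (∑ v' ∈ P, G x x' v') := by
    intro F G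
    calc ∑ v ∈ P, ∑ v' ∈ P, ∑ x : Fin L, ∑ x' : Fin L, F x x' v * G x x' v'
        = ∑ v ∈ P, ∑ x : Fin L, ∑ x' : Fin L, ∑ v' ∈ P, F x x' v * G x x' v' :=
          Finset.sum_congr rfl fun v _ =>
            Finset.sum_comm.trans (Finset.sum_congr rfl fun x _ => Finset.sum_comm)
      _ = ∑ v ∈ P, ∑ x : Fin L, ∑ x' : Fin L, F x x' v * ∑ v' ∈ P, G x x' v' :=
          Finset.sum_congr rfl fun v _ => Finset.sum_congr rfl fun x _ =>
            Finset.sum_congr rfl fun x' _ => (Finset.mul_sum _ _ _).symm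
      _ = ∑ x : Fin L, ∑ x' : Fin L, ∑ v ∈ P, F x x' v * ∑ v' ∈ P, G x x' v' :=
          Finset.sum_comm.trans (Finset.sum_congr rfl fun x _ => Finset.sum_comm)
      _ = ∑ x : Fin L, ∑ x' : Fin L, (∑ v ∈ P, F x x' v) * ∑ v' ∈ P, G x x' v' :=
          Finset.sum_congr rfl fun x _ => Finset.sum_congr rfl fun x' _ =>
            (Finset.sum_mul _ _ _).symm
  have step1 : ∑ v ∈ P, ∑ v' ∈ P,
      ‖∑ x : Fin L, eAdd m (t * ((∑ j ∈ Iic x, (v j : ℝ)) - (∑ j ∈ Iic x, (v' j : ℝ))))‖^2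
      = (∑ x : Fin L, ∑ x' : Fin L,
          (∑ v ∈ P, eAdd m (t * ((∑ j ∈ Iic x, (v j : ℝ)) - (∑ j ∈ Iic x', (v j : ℝ))))) *
          (∑ v' ∈ P, eAdd m (t * ((∑ j ∈ Iic x', (v' j : ℝ)) - (∑ j ∈ Iic x, (v' j : ℝ)))))).re := by
    rw [Finset.sum_congr rfl fun v _ => Finset.sum_congr rfl fun v' _ => expand v v']
    rw [← key]
    rw [Complex.re_sum]
    exact Finset.sum_congr rfl fun v _ => (Complex.re_sum _ _).symm
  rw [step1]
  have normW : ∀ x x' : Fin L,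
      ‖(∑ v ∈ P, eAdd m (t * ((∑ j ∈ Iic x, (v j : ℝ)) - (∑ j ∈ Iic x', (v j : ℝ))))) *
        (∑ v' ∈ P, eAdd m (t * ((∑ j ∈ Iic x', (v' j : ℝ)) - (∑ j ∈ Iic x, (v' j : ℝ)))))‖
      = 4^L * (‖1 + eAdd m t‖^2/4) ^ (Nat.dist x.val x'.val) := by
    intro x x'
    rw [norm_mul, hP, vsum_norm m L t x x', vsum_norm m L t x' x, Nat.dist_comm x'.val x.val]
    have hk : Nat.dist x.val x'.val ≤ L := by
      have h1 := x.isLt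
      have h2 := x'.isLt
      simp [Nat.dist]
      omega
    have h4 : (4:ℝ)^L = 4^(L - Nat.dist x.val x'.val) * 4^(Nat.dist x.val x'.val) := by
      rw [← pow_add]
      congr 1
      omega
    have h4k : (4:ℝ)^(Nat.dist x.val x'.val) ≠ 0 := by positivity
    have e1 : (2:ℝ)^(L - Nat.dist x.val x'.val) * 2^(L - Nat.dist x.val x'.val)
        = 4^(L - Nat.dist x.val x'.val) := by rw [← mul_pow]; norm_num
    have e2 : ∀ c : ℝ, c^(Nat.dist x.val x'.val) * c^(Nat.dist x.val x'.val)
        = (c^2)^(Nat.dist x.val x'.val) := fun c => by rw [← mul_pow, sq]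
    rw [div_pow, ← mul_div_assoc, eq_div_iff h4k, h4, ← e1, ← e2]
    ring
  calc (∑ x : Fin L, ∑ x' : Fin L,
          (∑ v ∈ P, eAdd m (t * ((∑ j ∈ Iic x, (v j : ℝ)) - (∑ j ∈ Iic x', (v j : ℝ))))) *
          (∑ v' ∈ P, eAdd m (t * ((∑ j ∈ Iic x', (v' j : ℝ)) - (∑ j ∈ Iic x, (v' j : ℝ)))))).re
      ≤ ‖∑ x : Fin L, ∑ x' : Fin L,
          (∑ v ∈ P, eAdd m (t * ((∑ j ∈ Iic x, (v j : ℝ)) - (∑ j ∈ Iic x', (v j : ℝ))))) *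
          (∑ v' ∈ P, eAdd m (t * ((∑ j ∈ Iic x', (v' j : ℝ)) - (∑ j ∈ Iic x, (v' j : ℝ)))))‖ :=
        Complex.re_le_norm _
    _ ≤ ∑ x : Fin L, ∑ x' : Fin L,
          ‖(∑ v ∈ P, eAdd m (t * ((∑ j ∈ Iic x, (v j : ℝ)) - (∑ j ∈ Iic x', (v j : ℝ))))) *
          (∑ v' ∈ P, eAdd m (t * ((∑ j ∈ Iic x', (v' j : ℝ)) - (∑ j ∈ Iic x, (v' j : ℝ)))))‖ :=
        (norm_sum_le _ _).trans (Finset.sum_le_sum fun x _ => norm_sum_le _ _)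
    _ = ∑ x : Fin L, ∑ x' : Fin L, 4^L * (‖1 + eAdd m t‖^2/4) ^ (Nat.dist x.val x'.val) :=
        Finset.sum_congr rfl fun x _ => Finset.sum_congr rfl fun x' _ => normW x x'
    _ = 4^L * ∑ x : Fin L, ∑ x' : Fin L, (‖1 + eAdd m t‖^2/4) ^ (Nat.dist x.val x'.val) := by
        rw [Finset.mul_sum]
        exact Finset.sum_congr rfl fun x _ => (Finset.mul_sum _ _ _).symm
    _ ≤ 4^L * (L * (2 / (1 - ‖1 + eAdd m t‖^2/4))) := by
        apply mul_le_mul_of_nonneg_left (dist_sum L _ hq0 hq1) (by positivity)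

lemma q_fact (m tn : ℕ) (hm : 2 ≤ m) (ht1 : 1 ≤ tn) (ht2 : tn ≤ m - 1) :
    4/(m:ℝ)^2 ≤ 1 - ‖1 + eAdd m (tn:ℝ)‖^2/4 := by
  have hm0 : (0:ℝ) < m := by positivity
  rw [norm_one_add_eAdd_sq]
  have h1 : 1 - (2 + 2 * Real.cos (2 * π * tn / m))/4
      = Real.sin (π * tn / m) ^ 2 := by
    rw [Real.sin_sq_eq_half_sub, show 2*(π*(tn:ℝ)/m) = 2*π*tn/m by ring]
    ring
  rw [h1]
  have h2 := sin_ge m tn hm ht1 ht2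
  have h3 : (0:ℝ) ≤ 2 / m := by positivity
  calc 4/(m:ℝ)^2 = (2/m)^2 := by rw [div_pow]; norm_num
    _ ≤ Real.sin (π * tn / m) ^ 2 := by
        apply pow_le_pow_left₀ h3 h2
  done

theorem stmt_13 (m L : ℕ) (hm : 2 ≤ m) (hL : 1 ≤ L) :
    ∑ a ∈ Finset.range m,
      ∑ v ∈ Fintype.piFinset (fun _ : Fin L => ({0, 1} : Finset ℕ)),
        ∑ v' ∈ Fintype.piFinset (fun _ : Fin L => ({0, 1} : Finset ℕ)),
          ‖∑ x : Fin L, ∑ t ∈ Finset.Icc 1 (m - 1),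
              eAdd m ((t : ℝ) * ((∑ j ∈ Finset.Iic x, (v j : ℝ)) -
                (∑ j ∈ Finset.Iic x, (v' j : ℝ)) - a))‖ ^ 2 ≤
      2 ^ (2 * L + 2) * (m : ℝ) ^ 4 * L := by
  classical
  have hm0 : (0:ℝ) < m := by positivity
  have hmsq : (0:ℝ) < 4/(m:ℝ)^2 := by positivity
  set P := Fintype.piFinset (fun _ : Fin L => ({0, 1} : Finset ℕ)) with hP
  have stepA : ∀ (a : ℕ) (v v' : Fin L → ℕ),
      ∑ x : Fin L, ∑ t ∈ Icc 1 (m - 1),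
          eAdd m ((t : ℝ) * ((∑ j ∈ Iic x, (v j : ℝ)) - (∑ j ∈ Iic x, (v' j : ℝ)) - a))
      = ∑ t ∈ Icc 1 (m - 1),
          (∑ x : Fin L, eAdd m ((t:ℝ) * ((∑ j ∈ Iic x, (v j : ℝ)) - (∑ j ∈ Iic x, (v' j : ℝ)))))
            * eAdd m (-((t:ℝ) * a)) := by
    intro a v v'
    rw [Finset.sum_comm]
    refine Finset.sum_congr rfl fun t _ => ?_
    rw [Finset.sum_mul]
    refine Finset.sum_congr rfl fun x _ => ?_
    rw [← eAdd_add]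
    congr 1
    ring
  have rew : ∑ a ∈ range m, ∑ v ∈ P, ∑ v' ∈ P,
      ‖∑ x : Fin L, ∑ t ∈ Icc 1 (m - 1),
          eAdd m ((t : ℝ) * ((∑ j ∈ Iic x, (v j : ℝ)) - (∑ j ∈ Iic x, (v' j : ℝ)) - a))‖ ^ 2
      = ∑ v ∈ P, ∑ v' ∈ P, ∑ a ∈ range m,
      ‖∑ t ∈ Icc 1 (m - 1),
          (∑ x : Fin L, eAdd m ((t:ℝ) * ((∑ j ∈ Iic x, (v j : ℝ)) - (∑ j ∈ Iic x, (v' j : ℝ)))))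
            * eAdd m (-((t:ℝ) * a))‖ ^ 2 := by
    rw [Finset.sum_congr rfl fun a _ => Finset.sum_congr rfl fun v _ =>
      Finset.sum_congr rfl fun v' _ => by rw [stepA a v v']]
    exact Finset.sum_comm.trans (Finset.sum_congr rfl fun v _ => Finset.sum_comm)
  rw [rew]
  have orth : ∀ v v' : Fin L → ℕ,
      ∑ a ∈ range m, ‖∑ t ∈ Icc 1 (m - 1),
          (∑ x : Fin L, eAdd m ((t:ℝ) * ((∑ j ∈ Iic x, (v j : ℝ)) - (∑ j ∈ Iic x, (v' j : ℝ)))))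
            * eAdd m (-((t:ℝ) * a))‖ ^ 2
      = m * ∑ t ∈ Icc 1 (m-1),
          ‖∑ x : Fin L, eAdd m ((t:ℝ) * ((∑ j ∈ Iic x, (v j : ℝ)) - (∑ j ∈ Iic x, (v' j : ℝ))))‖^2 :=
    fun v v' => ortho m hm _
  rw [Finset.sum_congr rfl fun v _ => Finset.sum_congr rfl fun v' _ => orth v v']
  have pull : ∑ v ∈ P, ∑ v' ∈ P, ((m:ℝ) * ∑ t ∈ Icc 1 (m-1),
          ‖∑ x : Fin L, eAdd m ((t:ℝ) * ((∑ j ∈ Iic x, (v j : ℝ)) - (∑ j ∈ Iic x, (v' j : ℝ))))‖^2)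
      = (m:ℝ) * ∑ t ∈ Icc 1 (m-1), ∑ v ∈ P, ∑ v' ∈ P,
          ‖∑ x : Fin L, eAdd m ((t:ℝ) * ((∑ j ∈ Iic x, (v j : ℝ)) - (∑ j ∈ Iic x, (v' j : ℝ))))‖^2 := by
    have e : ∀ (s : Finset (Fin L → ℕ)) (W : (Fin L → ℕ) → ℝ),
        ∑ v ∈ s, (m:ℝ) * W v = (m:ℝ) * ∑ v ∈ s, W v := fun s W => (Finset.mul_sum _ _ _).symm
    refine ((Finset.sum_congr rfl fun v _ => e _ _).trans (e _ _)).trans ?_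
    congr 1
    exact (Finset.sum_congr rfl fun v _ => Finset.sum_comm).trans Finset.sum_comm
  rw [pull]
  -- per-t bound
  have per_t : ∀ tn ∈ Icc 1 (m-1),
      ∑ v ∈ P, ∑ v' ∈ P,
          ‖∑ x : Fin L, eAdd m ((tn:ℝ) * ((∑ j ∈ Iic x, (v j : ℝ)) - (∑ j ∈ Iic x, (v' j : ℝ))))‖^2
      ≤ 4^L * ((L:ℝ) * ((m:ℝ)^2/2)) := by
    intro tn htn
    simp only [Finset.mem_Icc] at htn
    have hq := q_fact m tn hm htn.1 htn.2
    have hq1 : ‖1 + eAdd m (tn:ℝ)‖^2/4 < 1 := by nlinarith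
    refine (sum_vv m L (tn:ℝ) hq1).trans ?_
    have h2 : 2 / (1 - ‖1 + eAdd m (tn:ℝ)‖^2/4) ≤ (m:ℝ)^2/2 := by
      have : 2 / (1 - ‖1 + eAdd m (tn:ℝ)‖^2/4) ≤ 2 / (4/(m:ℝ)^2) := by
        gcongr
      rw [show (2:ℝ) / (4/(m:ℝ)^2) = (m:ℝ)^2/2 by field_simp; ring] at this
      exact this
    gcongr
  have card_le : ((Icc 1 (m-1)).card : ℝ) ≤ (m:ℝ) := by
    rw [Nat.card_Icc]
    have : m - 1 + 1 - 1 ≤ m := by omega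
    exact_mod_cast this
  calc (m:ℝ) * ∑ t ∈ Icc 1 (m-1), ∑ v ∈ P, ∑ v' ∈ P,
          ‖∑ x : Fin L, eAdd m ((t:ℝ) * ((∑ j ∈ Iic x, (v j : ℝ)) - (∑ j ∈ Iic x, (v' j : ℝ))))‖^2
      ≤ (m:ℝ) * ∑ _t ∈ Icc 1 (m-1), 4^L * ((L:ℝ) * ((m:ℝ)^2/2)) := by
        apply mul_le_mul_of_nonneg_left (Finset.sum_le_sum per_t) (le_of_lt hm0)
    _ = (m:ℝ) * (((Icc 1 (m-1)).card : ℝ) * (4^L * ((L:ℝ) * ((m:ℝ)^2/2)))) := by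
        rw [Finset.sum_const, nsmul_eq_mul]
    _ ≤ (m:ℝ) * ((m:ℝ) * (4^L * ((L:ℝ) * ((m:ℝ)^2/2)))) := by
        gcongr
    _ ≤ 2 ^ (2*L+2) * (m:ℝ)^4 * L := by
        rw [show (2:ℝ)^(2*L+2) = 4 * 4^L by rw [pow_add, pow_mul]; norm_num [mul_comm]]
        have h4L : (0:ℝ) ≤ 4^L * (m:ℝ)^4 * L := by positivity
        have heq : (m:ℝ) * ((m:ℝ) * (4^L * ((L:ℝ) * ((m:ℝ)^2/2)))) = (4^L * (m:ℝ)^4 * (L:ℝ))/2 := by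
          ring
        rw [heq]
        linarith
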